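/- (sGS decomposition theorem) Let X_1,…,X_s (s ≥ 2) be finite-dimensional real inner product spaces, X = X_1×⋯×X_s, and let Q : X → X be a self-adjoint positive semidefinite linear operator with block decomposition Q = U + D + U*, where U is the strictly upper block triangular part and D = diag(Q_{1,1},…,Q_{s,s}) is the block diagonal part, each Q_{i,i} being positive definite. Let S = sGS(Q) := U D⁻¹ U*, let p be a closed proper convex function on X_1, c ∈ X, q(x) = ½⟨x, Qx⟩ − ⟨c, x⟩, and let z ∈ X be given. Let δ′, δ ∈ X be two error vectors with δ′_1 = δ_1 and define Δ(δ′,δ) := δ + U D⁻¹(δ − δ′). For i = s,…,2 define the backward sweep x′_i := argmin_{x_i ∈ X_i} { p(z_1) + q(z_{≤ i−1}; x_i; x′_{≥ i+1}) − ⟨δ′_i, x_i⟩ } = Q_{i,i}⁻¹( c_i + δ′_i − Σ_{j=1}^{i−1} Q_{j,i}* z_j − Σ_{j=i+1}^{s} Q_{i,j} x′_j ), and then the forward sweep x⁺_1 := argmin_{x_1 ∈ X_1} { p(x_1) + q(x_1; x′_{≥ 2}) − ⟨δ_1, x_1⟩ } and, for i = 2,…,s, x⁺_i := Q_{i,i}⁻¹(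 c_i + δ_i − Σ_{j=1}^{i−1} Q_{j,i}* x⁺_j − Σ_{j=i+1}^{s} Q_{i,j} x′_j ). Then x⁺ = (x⁺_1,…,x⁺_s) is the unique optimal solution of the problem min_{x ∈ X} { p(x_1) + q(x) + ½‖x − z‖²_S − ⟨x, Δ(δ′,δ)⟩ }, where ‖w‖²_S = ⟨w, S w⟩. -/

import Mathlib

/- STATEMENT 0: the sGS decomposition theorem.
   The s ≥ 2 blocks are indexed by `Fin (s+2)` (so the first block is index 0).
   The self-adjoint operator Q is given by its blocks `Qb i j : Xs j →L[ℝ] Xs i`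
   with `Qb i j = (Qb j i)*` (so the strictly upper triangular part U consists of
   the blocks with i < j and the block diagonal D of the blocks Qb i i); Q is
   positive semidefinite and each diagonal block Qb i i is positive definite, with
   inverse `Qinv i` (supplied as data together with the inverse identities — no
   loss, since a positive definite operator on a finite-dimensional space is
   invertible).  For a vector w, (U*w)_j = Σ_{k<j} Q_{j,k} w_k, so that
   ‖w‖²_S = ⟨w, UD⁻¹U*w⟩ = Σ_j ⟨(U*w)_j, Q_{j,j}⁻¹ (U*w)_j⟩, and
   Δ(δ',δ)_i = δ_i + Σ_{j>i} Q_{i,j} Q_{j,j}⁻¹ (δ_j − δ'_j).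
   The backward sweep x′ and the forward sweep x⁺ are given by the formulas of the
   theorem (the x⁺_1-step being the minimization defining x⁺ at block 0), and the
   conclusion is that x⁺ is the unique optimal solution of
   min p(x_1) + q(x) + ½‖x−z‖²_S − ⟨x, Δ(δ',δ)⟩. -/

open scoped RealInnerProductSpace

set_option maxHeartbeats 1000000

private lemma sum_split' {n : ℕ} {M : Type*} [AddCommMonoid M] (i : Fin n) (f : Fin n → M) :
    ∑ j, f j = (∑ j ∈ Finset.univ.filter (fun j => j < i), f j) + f i +
      ∑ j ∈ Finset.univ.filter (fun j => i < j), f j := by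
  have h2 : Finset.univ.filter (fun j => ¬ j < i)
      = insert i (Finset.univ.filter (fun j => i < j)) := by
    ext j
    simp only [Finset.mem_filter, Finset.mem_univ, true_and, Finset.mem_insert, not_lt]
    constructor
    · intro h
      rcases eq_or_lt_of_le h with h|h
      · exact Or.inl h.symm
      · exact Or.inr h
    · intro h
      rcases h with h|h
      · exact le_of_eq h.symm
      · exact le_of_lt h
  rw [← Finset.sum_filter_add_sum_filter_not Finset.univ (fun j => j < i) f, h2,
    Finset.sum_insert (by simp), add_assoc]

private lemma sum_swap_lt' {n : ℕ} {M : Type*} [AddCommMonoid M] (f : Fin n → Fin n → M) :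
    ∑ j : Fin n, ∑ k ∈ Finset.univ.filter (fun k => k < j), f j k
      = ∑ k : Fin n, ∑ j ∈ Finset.univ.filter (fun j => k < j), f j k := by
  rw [Finset.sum_comm' (t' := Finset.univ)
    (s' := fun k => Finset.univ.filter (fun j => k < j)) (by simp)]

private lemma quad_exp' {Y : Type*} [NormedAddCommGroup Y] [InnerProductSpace ℝ Y]
    (T : Y →L[ℝ] Y) (hT : ∀ a b : Y, ⟪a, T b⟫ = ⟪b, T a⟫) (u v : Y) :
    ⟪v, T v⟫ = ⟪u, T u⟫ + 2*⟪v - u, T u⟫ + ⟪v - u, T (v - u)⟫ := by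
  simp only [map_sub, inner_sub_left, inner_sub_right]
  linarith [hT u v]



theorem sGS_decomposition_theorem (s : ℕ)
    {Xs : Fin (s + 2) → Type*} [∀ i, NormedAddCommGroup (Xs i)]
    [∀ i, InnerProductSpace ℝ (Xs i)] [∀ i, FiniteDimensional ℝ (Xs i)]
    (Qb : ∀ i j, Xs j →L[ℝ] Xs i)
    (hsym : ∀ i j, Qb i j = ContinuousLinearMap.adjoint (Qb j i))
    (hpsd : ∀ x : ∀ i, Xs i, 0 ≤ ∑ i, ⟪x i, ∑ j, Qb i j (x j)⟫)
    (hpd : ∀ i, ∀ w : Xs i, w ≠ 0 → 0 < ⟪w, Qb i i w⟫)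
    (Qinv : ∀ i, Xs i →L[ℝ] Xs i)
    (hQinv₁ : ∀ i, (Qb i i).comp (Qinv i) = ContinuousLinearMap.id ℝ (Xs i))
    (hQinv₂ : ∀ i, (Qinv i).comp (Qb i i) = ContinuousLinearMap.id ℝ (Xs i))
    (p : Xs 0 → EReal)
    (hp_proper : ∀ x, p x ≠ ⊥) (hp_nontriv : ∃ x, p x ≠ ⊤)
    (hp_lsc : LowerSemicontinuous p)
    (hp_convex : ∀ (x y : Xs 0) (a b : ℝ), 0 ≤ a → 0 ≤ b → a + b = 1 →
      p (a • x + b • y) ≤ (a : EReal) * p x + (b : EReal) * p y)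
    (c z δ' δ : ∀ i, Xs i)
    (hδ1 : δ' 0 = δ 0)
    -- the quadratic part q(x) = ½⟨x,Qx⟩ − ⟨c,x⟩
    (q : (∀ i, Xs i) → ℝ)
    (hq : ∀ x, q x = 1/2 * (∑ i, ⟪x i, ∑ j, Qb i j (x j)⟫) - ∑ i, ⟪c i, x i⟫)
    -- Δ(δ',δ) = δ + U D⁻¹ (δ − δ')
    (Δ : ∀ i, Xs i)
    (hΔ : ∀ i, Δ i = δ i +
      ∑ j ∈ Finset.univ.filter (fun j => i < j), Qb i j (Qinv j (δ j - δ' j)))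
    -- the sGS seminorm ‖w‖²_S with S = U D⁻¹ U*
    (SnormSq : (∀ i, Xs i) → ℝ)
    (hS : ∀ w, SnormSq w = ∑ j,
      ⟪∑ k ∈ Finset.univ.filter (fun k => k < j), Qb j k (w k),
        Qinv j (∑ k ∈ Finset.univ.filter (fun k => k < j), Qb j k (w k))⟫)
    -- the objective of the proximal problem
    (F : (∀ i, Xs i) → EReal)
    (hF : ∀ x, F x = p (x 0) +
      ((q x + 1/2 * SnormSq (fun i => x i - z i) - ∑ i, ⟪x i, Δ i⟫ : ℝ) : EReal))
    -- backward sweep: for i = s,…,2,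
    -- x′_i = Q_{i,i}⁻¹(c_i + δ′_i − Σ_{j<i} Q_{j,i}* z_j − Σ_{j>i} Q_{i,j} x′_j)
    (x' : ∀ i, Xs i)
    (hx' : ∀ i, i ≠ 0 → x' i = Qinv i (c i + δ' i -
      (∑ j ∈ Finset.univ.filter (fun j => j < i), Qb i j (z j)) -
      (∑ j ∈ Finset.univ.filter (fun j => i < j), Qb i j (x' j))))
    -- forward sweep
    (xp : ∀ i, Xs i)
    (hxp0 : ∀ t : Xs 0,
      p (xp 0) + ((q (Function.update x' 0 (xp 0)) - ⟪δ 0, xp 0⟫ : ℝ) : EReal) ≤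
      p t + ((q (Function.update x' 0 t) - ⟪δ 0, t⟫ : ℝ) : EReal))
    (hxpi : ∀ i, i ≠ 0 → xp i = Qinv i (c i + δ i -
      (∑ j ∈ Finset.univ.filter (fun j => j < i), Qb i j (xp j)) -
      (∑ j ∈ Finset.univ.filter (fun j => i < j), Qb i j (x' j)))) :
    (∀ x : ∀ i, Xs i, F xp ≤ F x) ∧
    (∀ x : ∀ i, Xs i, (∀ w : ∀ i, Xs i, F x ≤ F w) → x = xp) := by
  classical
  have hQQ : ∀ j (a : Xs j), Qb j j (Qinv j a) = a := by
    intro j a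
    have h2 := congrArg (fun T : Xs j →L[ℝ] Xs j => T a) (hQinv₁ j)
    simpa using h2
  have hIQ : ∀ j (a : Xs j), Qinv j (Qb j j a) = a := by
    intro j a
    have h2 := congrArg (fun T : Xs j →L[ℝ] Xs j => T a) (hQinv₂ j)
    simpa using h2
  have hadj : ∀ (i j) (a : Xs i) (b : Xs j), ⟪a, Qb i j b⟫ = ⟪Qb j i a, b⟫ := by
    intro i j a b
    rw [hsym i j]
    exact ContinuousLinearMap.adjoint_inner_right _ _ _
  have hsa : ∀ j, ContinuousLinearMap.adjoint (Qinv j) = Qinv j := by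
    intro j
    have h0 : ContinuousLinearMap.adjoint (Qb j j) = Qb j j := (hsym j j).symm
    have h1 : (ContinuousLinearMap.adjoint (Qinv j)).comp (Qb j j)
        = ContinuousLinearMap.id ℝ (Xs j) := by
      nth_rewrite 1 [← h0]
      rw [← ContinuousLinearMap.adjoint_comp, hQinv₁ j, ContinuousLinearMap.adjoint_id]
    calc ContinuousLinearMap.adjoint (Qinv j)
        = (ContinuousLinearMap.adjoint (Qinv j)).comp ((Qb j j).comp (Qinv j)) := by
          rw [hQinv₁ j, ContinuousLinearMap.comp_id]
      _ = ((ContinuousLinearMap.adjoint (Qinv j)).comp (Qb j j)).comp (Qinv j) := by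
          rw [ContinuousLinearMap.comp_assoc]
      _ = Qinv j := by rw [h1, ContinuousLinearMap.id_comp]
  have hinvadj : ∀ j (a b : Xs j), ⟪a, Qinv j b⟫ = ⟪b, Qinv j a⟫ := by
    intro j a b
    conv_lhs => rw [← hsa j]
    rw [ContinuousLinearMap.adjoint_inner_right, real_inner_comm]
  have hinv_nonneg : ∀ j (a : Xs j), 0 ≤ ⟪a, Qinv j a⟫ := by
    intro j a
    by_cases h : Qinv j a = 0
    · rw [h, inner_zero_right]
    · have h2 : ⟪a, Qinv j a⟫ = ⟪Qinv j a, Qb j j (Qinv j a)⟫ :=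
        (congrArg (fun y => (inner ℝ y (Qinv j a) : ℝ)) (hQQ j a).symm).trans
          (real_inner_comm _ _)
      rw [h2]
      exact le_of_lt (hpd j _ h)
  have hinv_zero : ∀ j (a : Xs j), ⟪a, Qinv j a⟫ = 0 → a = 0 := by
    intro j a ha
    by_cases h : Qinv j a = 0
    · rw [← hQQ j a, h, map_zero]
    · exfalso
      have h2 : ⟪a, Qinv j a⟫ = ⟪Qinv j a, Qb j j (Qinv j a)⟫ :=
        (congrArg (fun y => (inner ℝ y (Qinv j a) : ℝ)) (hQQ j a).symm).trans
          (real_inner_comm _ _)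
      have h3 := hpd j _ h
      rw [← h2, ha] at h3
      exact lt_irrefl 0 h3
  have Bsym : ∀ a b : (∀ i, Xs i),
      ∑ i, ⟪a i, ∑ j, Qb i j (b j)⟫ = ∑ i, ⟪b i, ∑ j, Qb i j (a j)⟫ := by
    intro a b
    simp_rw [inner_sum]
    rw [Finset.sum_comm]
    refine Finset.sum_congr rfl fun i _ => Finset.sum_congr rfl fun j _ => ?_
    rw [hadj, real_inner_comm]

  have Bexp2 : ∀ a m : (∀ i, Xs i),
      ∑ i, ⟪a i + m i, ∑ j, Qb i j (a j + m j)⟫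
        = (∑ i, ⟪a i, ∑ j, Qb i j (a j)⟫) + 2*(∑ i, ⟪m i, ∑ j, Qb i j (a j)⟫)
          + ∑ i, ⟪m i, ∑ j, Qb i j (m j)⟫ := by
    intro a m
    simp_rw [map_add, Finset.sum_add_distrib, inner_add_left, inner_add_right,
      Finset.sum_add_distrib]
    linarith [Bsym a m]
  have Bexp : ∀ a b : (∀ i, Xs i),
      ∑ i, ⟪b i, ∑ j, Qb i j (b j)⟫
        = (∑ i, ⟪a i, ∑ j, Qb i j (a j)⟫) + 2*(∑ i, ⟪b i - a i, ∑ j, Qb i j (a j)⟫)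
          + ∑ i, ⟪b i - a i, ∑ j, Qb i j (b j - a j)⟫ := by
    intro a b
    have h := Bexp2 a (fun i => b i - a i)
    have hb : ∀ i, a i + (b i - a i) = b i := fun i => by abel
    simp_rw [hb] at h
    exact h
  have keyQ : ∀ j : Fin (s+2), j ≠ 0 →
      x' j = xp j + Qinv j ((∑ k ∈ Finset.univ.filter (fun k => k < j), Qb j k (xp k - z k))
        - (δ j - δ' j)) := by
    intro j hj
    rw [hx' j hj, hxpi j hj, ← map_add]
    congr 1
    have hsub : ∑ k ∈ Finset.univ.filter (fun k => k < j), Qb j k (xp k - z k)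
        = (∑ k ∈ Finset.univ.filter (fun k => k < j), Qb j k (xp k))
          - ∑ k ∈ Finset.univ.filter (fun k => k < j), Qb j k (z k) := by
      rw [← Finset.sum_sub_distrib]
      exact Finset.sum_congr rfl fun k _ => map_sub _ _ _
    rw [hsub]
    abel
  have hterm : ∀ (i j : Fin (s+2)), j ≠ 0 →
      Qb i j (xp j) - Qb i j (x' j)
        + Qb i j (Qinv j (∑ k ∈ Finset.univ.filter (fun k => k < j), Qb j k (xp k - z k)))
        - Qb i j (Qinv j (δ j - δ' j)) = 0 := by
    intro i j hj
    rw [keyQ j hj]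
    simp only [map_add, map_sub]
    abel
  -- the gradient identity at block 0 for the forward-sweep objective
  have Iphi : ∀ t : Xs 0,
      (q (Function.update x' 0 t) - ⟪δ 0, t⟫)
          - (q (Function.update x' 0 (xp 0)) - ⟪δ 0, xp 0⟫)
        = ⟪t - xp 0, (∑ j, Qb 0 j (Function.update x' 0 (xp 0) j)) - c 0 - δ 0⟫
          + 1/2 * ⟪t - xp 0, Qb 0 0 (t - xp 0)⟫ := by
    intro t
    have hupdf : Function.update x' 0 t = fun j => Function.update x' 0 (xp 0) j
          + Function.update (fun i => (0 : Xs i)) 0 (t - xp 0) j := by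
      funext j
      by_cases hj : j = 0
      · subst hj
        simp
      · rw [Function.update_of_ne hj, Function.update_of_ne hj, Function.update_of_ne hj,
          add_zero]
    have hm0 : Function.update (fun i => (0 : Xs i)) 0 (t - xp 0) 0 = t - xp 0 :=
      Function.update_self _ _ _
    have hmne : ∀ i : Fin (s+2), i ≠ 0 →
        Function.update (fun i => (0 : Xs i)) 0 (t - xp 0) i = 0 :=
      fun i hi => Function.update_of_ne hi _ _
    have e1 : ∑ i, ⟪Function.update (fun i => (0 : Xs i)) 0 (t - xp 0) i,
          ∑ j, Qb i j (Function.update x' 0 (xp 0) j)⟫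
        = ⟪t - xp 0, ∑ j, Qb 0 j (Function.update x' 0 (xp 0) j)⟫ := by
      rw [Finset.sum_eq_single 0]
      · rw [hm0]
      · intro i _ hi
        rw [hmne i hi, inner_zero_left]
      · intro h
        exact absurd (Finset.mem_univ 0) h
    have e2i : (∑ j, Qb 0 j (Function.update (fun i => (0 : Xs i)) 0 (t - xp 0) j))
        = Qb 0 0 (t - xp 0) := by
      rw [Finset.sum_eq_single 0]
      · rw [hm0]
      · intro j _ hj
        rw [hmne j hj, map_zero]
      · intro h
        exact absurd (Finset.mem_univ 0) h
    have e2 : ∑ i, ⟪Function.update (fun i => (0 : Xs i)) 0 (t - xp 0) i,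
          ∑ j, Qb i j (Function.update (fun i => (0 : Xs i)) 0 (t - xp 0) j)⟫
        = ⟪t - xp 0, Qb 0 0 (t - xp 0)⟫ := by
      rw [Finset.sum_eq_single 0]
      · rw [hm0, e2i]
      · intro i _ hi
        rw [hmne i hi, inner_zero_left]
      · intro h
        exact absurd (Finset.mem_univ 0) h
    have e3 : ∑ i, ⟪c i, Function.update x' 0 (xp 0) i
          + Function.update (fun i => (0 : Xs i)) 0 (t - xp 0) i⟫
        = (∑ i, ⟪c i, Function.update x' 0 (xp 0) i⟫) + ⟪c 0, t - xp 0⟫ := by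
      simp_rw [inner_add_right]
      rw [Finset.sum_add_distrib]
      congr 1
      rw [Finset.sum_eq_single 0]
      · rw [hm0]
      · intro i _ hi
        rw [hmne i hi, inner_zero_right]
      · intro h
        exact absurd (Finset.mem_univ 0) h
    have e4 : ⟪δ 0, t⟫ = ⟪δ 0, xp 0⟫ + ⟪δ 0, t - xp 0⟫ := by
      rw [← inner_add_right]
      congr 1
      abel
    rw [hq (Function.update x' 0 t), hq (Function.update x' 0 (xp 0))]
    simp only [hupdf]
    have e5 : ⟪t - xp 0, (∑ j, Qb 0 j (Function.update x' 0 (xp 0) j)) - c 0 - δ 0⟫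
        = ⟪t - xp 0, ∑ j, Qb 0 j (Function.update x' 0 (xp 0) j)⟫ - ⟪c 0, t - xp 0⟫
          - ⟪δ 0, t - xp 0⟫ := by
      rw [inner_sub_right, inner_sub_right, real_inner_comm (t - xp 0) (c 0),
        real_inner_comm (t - xp 0) (δ 0)]
    rw [Bexp2 (Function.update x' 0 (xp 0)) (Function.update (fun i => (0 : Xs i)) 0 (t - xp 0)),
      e1, e2, e3, e4, e5]
    ring
  have Gdiff : ∀ x : ∀ i, Xs i,
      (q x + 1/2 * SnormSq (fun i => x i - z i) - ∑ i, ⟪x i, Δ i⟫)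
          - (q xp + 1/2 * SnormSq (fun i => xp i - z i) - ∑ i, ⟪xp i, Δ i⟫)
        = ((q (Function.update x' 0 (x 0)) - ⟪δ 0, x 0⟫)
            - (q (Function.update x' 0 (xp 0)) - ⟪δ 0, xp 0⟫))
          + 1/2 * ∑ j ∈ Finset.univ.filter (fun j => j ≠ 0),
              ⟪Qb j j (x j - xp j)
                  + ∑ k ∈ Finset.univ.filter (fun k => k < j), Qb j k (x k - xp k),
                Qinv j (Qb j j (x j - xp j)
                  + ∑ k ∈ Finset.univ.filter (fun k => k < j), Qb j k (x k - xp k))⟫ := by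
    intro x
    have hVd : ∀ j : Fin (s+2),
        (∑ k ∈ Finset.univ.filter (fun k => k < j), Qb j k (x k - z k))
          - (∑ k ∈ Finset.univ.filter (fun k => k < j), Qb j k (xp k - z k))
        = ∑ k ∈ Finset.univ.filter (fun k => k < j), Qb j k (x k - xp k) := by
      intro j
      rw [← Finset.sum_sub_distrib]
      refine Finset.sum_congr rfl fun k _ => ?_
      rw [← map_sub]
      congr 1
      abel
    have hSx : SnormSq (fun i => x i - z i)
        = SnormSq (fun i => xp i - z i)
          + 2 * (∑ j, ⟪∑ k ∈ Finset.univ.filter (fun k => k < j), Qb j k (x k - xp k),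
              Qinv j (∑ k ∈ Finset.univ.filter (fun k => k < j), Qb j k (xp k - z k))⟫)
          + ∑ j, ⟪∑ k ∈ Finset.univ.filter (fun k => k < j), Qb j k (x k - xp k),
              Qinv j (∑ k ∈ Finset.univ.filter (fun k => k < j), Qb j k (x k - xp k))⟫ := by
      rw [hS, hS]
      have hj : ∀ j : Fin (s+2),
          ⟪∑ k ∈ Finset.univ.filter (fun k => k < j), Qb j k (x k - z k),
            Qinv j (∑ k ∈ Finset.univ.filter (fun k => k < j), Qb j k (x k - z k))⟫
          = ⟪∑ k ∈ Finset.univ.filter (fun k => k < j), Qb j k (xp k - z k),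
              Qinv j (∑ k ∈ Finset.univ.filter (fun k => k < j), Qb j k (xp k - z k))⟫
            + 2*⟪∑ k ∈ Finset.univ.filter (fun k => k < j), Qb j k (x k - xp k),
                Qinv j (∑ k ∈ Finset.univ.filter (fun k => k < j), Qb j k (xp k - z k))⟫
            + ⟪∑ k ∈ Finset.univ.filter (fun k => k < j), Qb j k (x k - xp k),
                Qinv j (∑ k ∈ Finset.univ.filter (fun k => k < j), Qb j k (x k - xp k))⟫ := by
        intro j
        have h := quad_exp' (Qinv j) (hinvadj j)
          (∑ k ∈ Finset.univ.filter (fun k => k < j), Qb j k (xp k - z k))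
          (∑ k ∈ Finset.univ.filter (fun k => k < j), Qb j k (x k - z k))
        rw [hVd j] at h
        exact h
      rw [Finset.sum_congr rfl fun j _ => hj j, Finset.sum_add_distrib,
        Finset.sum_add_distrib, ← Finset.mul_sum]
    have hCT : (∑ j, ⟪∑ k ∈ Finset.univ.filter (fun k => k < j), Qb j k (x k - xp k),
          Qinv j (∑ k ∈ Finset.univ.filter (fun k => k < j), Qb j k (xp k - z k))⟫)
        = ∑ i, ⟪x i - xp i, ∑ j ∈ Finset.univ.filter (fun j => i < j),
            Qb i j (Qinv j (∑ k ∈ Finset.univ.filter (fun k => k < j), Qb j k (xp k - z k)))⟫ := by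
      simp_rw [sum_inner]
      rw [sum_swap_lt' (fun j k => ⟪Qb j k (x k - xp k),
        Qinv j (∑ k' ∈ Finset.univ.filter (fun k' => k' < j), Qb j k' (xp k' - z k'))⟫)]
      refine Finset.sum_congr rfl fun i _ => ?_
      rw [inner_sum]
      refine Finset.sum_congr rfl fun j _ => ?_
      exact (hadj i j _ _).symm
    have h0empty : Finset.univ.filter (fun j : Fin (s+2) => j < 0) = ∅ := by
      ext j
      simp only [Finset.mem_filter, Finset.mem_univ, true_and, Finset.notMem_empty, iff_false]
      exact not_lt.mpr (Fin.zero_le j)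
    have hGzero : ∀ i : Fin (s+2), i ≠ 0 →
        (∑ j, Qb i j (xp j))
          + (∑ j ∈ Finset.univ.filter (fun j => i < j),
              Qb i j (Qinv j (∑ k ∈ Finset.univ.filter (fun k => k < j), Qb j k (xp k - z k))))
          - c i - Δ i = 0 := by
      intro i hi
      have hxpQ : Qb i i (xp i) = c i + δ i
          - (∑ j ∈ Finset.univ.filter (fun j => j < i), Qb i j (xp j))
          - ∑ j ∈ Finset.univ.filter (fun j => i < j), Qb i j (x' j) := by
        rw [hxpi i hi, hQQ]
      have hsum : ∑ j ∈ Finset.univ.filter (fun j => i < j),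
          (Qb i j (xp j) - Qb i j (x' j)
            + Qb i j (Qinv j (∑ k ∈ Finset.univ.filter (fun k => k < j), Qb j k (xp k - z k)))
            - Qb i j (Qinv j (δ j - δ' j))) = 0 := by
        refine Finset.sum_eq_zero fun j hj => ?_
        have hlt : i < j := (Finset.mem_filter.mp hj).2
        refine hterm i j fun h0 => ?_
        rw [h0] at hlt
        exact (not_lt.mpr (Fin.zero_le i)) hlt
      rw [hΔ i, sum_split' i (fun j => Qb i j (xp j)), hxpQ]
      rw [Finset.sum_sub_distrib, Finset.sum_add_distrib, Finset.sum_sub_distrib] at hsum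
      rw [← hsum]
      abel
    have hG0 : (∑ j, Qb 0 j (xp j))
        + (∑ j ∈ Finset.univ.filter (fun j => (0:Fin (s+2)) < j),
            Qb 0 j (Qinv j (∑ k ∈ Finset.univ.filter (fun k => k < j), Qb j k (xp k - z k))))
        - c 0 - Δ 0
        = (∑ j, Qb 0 j (Function.update x' 0 (xp 0) j)) - c 0 - δ 0 := by
      have hsum : ∑ j ∈ Finset.univ.filter (fun j => (0:Fin (s+2)) < j),
          (Qb 0 j (xp j) - Qb 0 j (x' j)
            + Qb 0 j (Qinv j (∑ k ∈ Finset.univ.filter (fun k => k < j), Qb j k (xp k - z k)))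
            - Qb 0 j (Qinv j (δ j - δ' j))) = 0 := by
        refine Finset.sum_eq_zero fun j hj => ?_
        have hlt : (0:Fin (s+2)) < j := (Finset.mem_filter.mp hj).2
        exact hterm 0 j ((Fin.pos_iff_ne_zero' j).mp hlt)
      have hupd : ∑ j, Qb 0 j (Function.update x' 0 (xp 0) j)
          = Qb 0 0 (xp 0)
            + ∑ j ∈ Finset.univ.filter (fun j => (0:Fin (s+2)) < j), Qb 0 j (x' j) := by
        rw [sum_split' 0 (fun j => Qb 0 j (Function.update x' 0 (xp 0) j)), h0empty,
          Finset.sum_empty, Function.update_self, zero_add]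
        congr 1
        refine Finset.sum_congr rfl fun j hj => ?_
        have hlt : (0:Fin (s+2)) < j := (Finset.mem_filter.mp hj).2
        rw [Function.update_of_ne ((Fin.pos_iff_ne_zero' j).mp hlt)]
      rw [hΔ 0, sum_split' 0 (fun j => Qb 0 j (xp j)), h0empty, Finset.sum_empty, zero_add,
        hupd]
      rw [Finset.sum_sub_distrib, Finset.sum_add_distrib, Finset.sum_sub_distrib] at hsum
      rw [← sub_eq_zero, ← hsum]
      abel
    have hIL : (∑ i, ⟪x i - xp i, ∑ j, Qb i j (xp j)⟫)
        + (∑ j, ⟪∑ k ∈ Finset.univ.filter (fun k => k < j), Qb j k (x k - xp k),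
            Qinv j (∑ k ∈ Finset.univ.filter (fun k => k < j), Qb j k (xp k - z k))⟫)
        - (∑ i, ⟪x i - xp i, c i⟫) - (∑ i, ⟪x i - xp i, Δ i⟫)
        = ⟪x 0 - xp 0, (∑ j, Qb 0 j (Function.update x' 0 (xp 0) j)) - c 0 - δ 0⟫ := by
      rw [hCT, ← Finset.sum_add_distrib, ← Finset.sum_sub_distrib, ← Finset.sum_sub_distrib]
      have hcomb : ∀ i : Fin (s+2),
          ⟪x i - xp i, ∑ j, Qb i j (xp j)⟫
            + ⟪x i - xp i, ∑ j ∈ Finset.univ.filter (fun j => i < j),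
                Qb i j (Qinv j (∑ k ∈ Finset.univ.filter (fun k => k < j), Qb j k (xp k - z k)))⟫
            - ⟪x i - xp i, c i⟫ - ⟪x i - xp i, Δ i⟫
          = ⟪x i - xp i, (∑ j, Qb i j (xp j))
              + (∑ j ∈ Finset.univ.filter (fun j => i < j),
                  Qb i j (Qinv j (∑ k ∈ Finset.univ.filter (fun k => k < j), Qb j k (xp k - z k))))
              - c i - Δ i⟫ := by
        intro i
        rw [inner_sub_right, inner_sub_right, inner_add_right]
      rw [Finset.sum_congr rfl fun i _ => hcomb i]
      rw [Finset.sum_eq_single 0]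
      · rw [hG0]
      · intro i _ hi
        rw [hGzero i hi, inner_zero_right]
      · intro h
        exact absurd (Finset.mem_univ 0) h
    have hB : (∑ i, ⟪x i - xp i, ∑ j, Qb i j (x j - xp j)⟫)
        = (∑ j, ⟪x j - xp j, Qb j j (x j - xp j)⟫)
          + 2*∑ j, ⟪x j - xp j,
              ∑ k ∈ Finset.univ.filter (fun k => k < j), Qb j k (x k - xp k)⟫ := by
      have hsp : ∀ i : Fin (s+2), ⟪x i - xp i, ∑ j, Qb i j (x j - xp j)⟫
          = (∑ j ∈ Finset.univ.filter (fun j => j < i), ⟪x i - xp i, Qb i j (x j - xp j)⟫)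
            + ⟪x i - xp i, Qb i i (x i - xp i)⟫
            + ∑ j ∈ Finset.univ.filter (fun j => i < j), ⟪x i - xp i, Qb i j (x j - xp j)⟫ := by
        intro i
        rw [inner_sum]
        exact sum_split' i _
      rw [Finset.sum_congr rfl fun i _ => hsp i, Finset.sum_add_distrib, Finset.sum_add_distrib]
      have e1 : ∑ i, ∑ j ∈ Finset.univ.filter (fun j => j < i),
            ⟪x i - xp i, Qb i j (x j - xp j)⟫
          = ∑ i, ⟪x i - xp i, ∑ k ∈ Finset.univ.filter (fun k => k < i), Qb i k (x k - xp k)⟫ := by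
        refine Finset.sum_congr rfl fun i _ => ?_
        rw [inner_sum]
      have e2 : ∑ i, ∑ j ∈ Finset.univ.filter (fun j => i < j),
            ⟪x i - xp i, Qb i j (x j - xp j)⟫
          = ∑ j, ⟪x j - xp j, ∑ k ∈ Finset.univ.filter (fun k => k < j), Qb j k (x k - xp k)⟫ := by
        rw [← sum_swap_lt' (fun j k => ⟪x k - xp k, Qb k j (x j - xp j)⟫)]
        refine Finset.sum_congr rfl fun j _ => ?_
        rw [inner_sum]
        refine Finset.sum_congr rfl fun k _ => ?_
        rw [hadj k j (x k - xp k) (x j - xp j)]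
        exact real_inner_comm _ _
      rw [e1, e2]
      ring
    have hwj : ∀ j : Fin (s+2),
        ⟪Qb j j (x j - xp j) + ∑ k ∈ Finset.univ.filter (fun k => k < j), Qb j k (x k - xp k),
          Qinv j (Qb j j (x j - xp j)
            + ∑ k ∈ Finset.univ.filter (fun k => k < j), Qb j k (x k - xp k))⟫
        = ⟪x j - xp j, Qb j j (x j - xp j)⟫
          + 2*⟪x j - xp j, ∑ k ∈ Finset.univ.filter (fun k => k < j), Qb j k (x k - xp k)⟫
          + ⟪∑ k ∈ Finset.univ.filter (fun k => k < j), Qb j k (x k - xp k),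
              Qinv j (∑ k ∈ Finset.univ.filter (fun k => k < j), Qb j k (x k - xp k))⟫ := by
      intro j
      rw [map_add, hIQ j, inner_add_left, inner_add_right, inner_add_right]
      have h1 : ⟪Qb j j (x j - xp j), x j - xp j⟫ = ⟪x j - xp j, Qb j j (x j - xp j)⟫ :=
        real_inner_comm _ _
      have h2 : ⟪Qb j j (x j - xp j),
          Qinv j (∑ k ∈ Finset.univ.filter (fun k => k < j), Qb j k (x k - xp k))⟫
          = ⟪x j - xp j, ∑ k ∈ Finset.univ.filter (fun k => k < j), Qb j k (x k - xp k)⟫ := by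
        rw [← hadj j j, hQQ]
      have h3 : ⟪∑ k ∈ Finset.univ.filter (fun k => k < j), Qb j k (x k - xp k), x j - xp j⟫
          = ⟪x j - xp j, ∑ k ∈ Finset.univ.filter (fun k => k < j), Qb j k (x k - xp k)⟫ :=
        real_inner_comm _ _
      rw [h1, h2, h3]
      ring
    have hfull : ∑ j, ⟪Qb j j (x j - xp j)
            + ∑ k ∈ Finset.univ.filter (fun k => k < j), Qb j k (x k - xp k),
          Qinv j (Qb j j (x j - xp j)
            + ∑ k ∈ Finset.univ.filter (fun k => k < j), Qb j k (x k - xp k))⟫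
        = ⟪x 0 - xp 0, Qb 0 0 (x 0 - xp 0)⟫
          + ∑ j ∈ Finset.univ.filter (fun j => j ≠ 0),
              ⟪Qb j j (x j - xp j)
                  + ∑ k ∈ Finset.univ.filter (fun k => k < j), Qb j k (x k - xp k),
                Qinv j (Qb j j (x j - xp j)
                  + ∑ k ∈ Finset.univ.filter (fun k => k < j), Qb j k (x k - xp k))⟫ := by
      have h01 : Finset.univ.filter (fun j : Fin (s+2) => j = 0) = {0} := by
        ext j
        simp
      rw [← Finset.sum_filter_add_sum_filter_not Finset.univ (fun j => j = 0), h01,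
        Finset.sum_singleton]
      congr 1
      rw [h0empty, Finset.sum_empty, add_zero, hIQ 0]
      exact real_inner_comm _ _
    have hI2 : (∑ i, ⟪x i - xp i, ∑ j, Qb i j (x j - xp j)⟫)
        + (∑ j, ⟪∑ k ∈ Finset.univ.filter (fun k => k < j), Qb j k (x k - xp k),
            Qinv j (∑ k ∈ Finset.univ.filter (fun k => k < j), Qb j k (x k - xp k))⟫)
        = ⟪x 0 - xp 0, Qb 0 0 (x 0 - xp 0)⟫
          + ∑ j ∈ Finset.univ.filter (fun j => j ≠ 0),
              ⟪Qb j j (x j - xp j)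
                  + ∑ k ∈ Finset.univ.filter (fun k => k < j), Qb j k (x k - xp k),
                Qinv j (Qb j j (x j - xp j)
                  + ∑ k ∈ Finset.univ.filter (fun k => k < j), Qb j k (x k - xp k))⟫ := by
      rw [hB, ← hfull]
      rw [Finset.sum_congr rfl fun j _ => hwj j]
      rw [Finset.sum_add_distrib]
      rw [Finset.sum_add_distrib]
      rw [← Finset.mul_sum]
    have hlin1 : (∑ i, ⟪c i, x i⟫) = (∑ i, ⟪c i, xp i⟫) + ∑ i, ⟪x i - xp i, c i⟫ := by
      rw [← Finset.sum_add_distrib]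
      refine Finset.sum_congr rfl fun i _ => ?_
      rw [real_inner_comm (c i) (x i - xp i), ← inner_add_right]
      congr 1
      abel
    have hlin2 : (∑ i, ⟪x i, Δ i⟫) = (∑ i, ⟪xp i, Δ i⟫) + ∑ i, ⟪x i - xp i, Δ i⟫ := by
      rw [← Finset.sum_add_distrib]
      refine Finset.sum_congr rfl fun i _ => ?_
      rw [← inner_add_left]
      congr 1
      abel
    rw [Iphi (x 0), hq x, hq xp, hSx, hlin1, hlin2, Bexp xp x]
    linarith [hIL, hI2]
  -- ===== EReal bookkeeping and conclusion =====
  obtain ⟨t0, ht0⟩ := hp_nontriv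
  have hfin : p (xp 0) ≠ ⊤ := by
    intro htop
    have h := hxp0 t0
    rw [htop, EReal.top_add_coe] at h
    exact (EReal.add_lt_top ht0 (EReal.coe_ne_top _)).ne (top_le_iff.mp h)
  obtain ⟨b, hb⟩ : ∃ b : ℝ, p (xp 0) = (b : EReal) := by
    lift p (xp 0) to ℝ using ⟨hfin, hp_proper _⟩ with b hb
    exact ⟨b, rfl⟩
  have hmin : ∀ x : ∀ i, Xs i, F xp ≤ F x := by
    intro x
    rw [hF x, hF xp, hb]
    by_cases hx0 : p (x 0) = ⊤
    · rw [hx0, EReal.top_add_coe]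
      exact le_top
    · obtain ⟨a, ha⟩ : ∃ a : ℝ, p (x 0) = (a : EReal) := by
        lift p (x 0) to ℝ using ⟨hx0, hp_proper _⟩ with a ha
        exact ⟨a, rfl⟩
      rw [ha, ← EReal.coe_add, ← EReal.coe_add, EReal.coe_le_coe_iff]
      have h1 := hxp0 (x 0)
      rw [ha, hb, ← EReal.coe_add, ← EReal.coe_add, EReal.coe_le_coe_iff] at h1
      have h2 := Gdiff x
      have h3 : (0:ℝ) ≤ ∑ j ∈ Finset.univ.filter (fun j => j ≠ 0),
          ⟪Qb j j (x j - xp j)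
              + ∑ k ∈ Finset.univ.filter (fun k => k < j), Qb j k (x k - xp k),
            Qinv j (Qb j j (x j - xp j)
              + ∑ k ∈ Finset.univ.filter (fun k => k < j), Qb j k (x k - xp k))⟫ :=
        Finset.sum_nonneg fun j _ => hinv_nonneg _ _
      linarith
  refine ⟨hmin, ?_⟩
  intro x hx
  have hx0 : p (x 0) ≠ ⊤ := by
    intro htop
    have h := hx xp
    rw [hF x, hF xp, htop, hb, EReal.top_add_coe, ← EReal.coe_add, top_le_iff] at h
    exact (EReal.coe_ne_top _) h
  obtain ⟨a, ha⟩ : ∃ a : ℝ, p (x 0) = (a : EReal) := by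
    lift p (x 0) to ℝ using ⟨hx0, hp_proper _⟩ with a ha
    exact ⟨a, rfl⟩
  have he1 := hx xp
  have he2 := hmin x
  rw [hF x, hF xp, ha, hb, ← EReal.coe_add, ← EReal.coe_add, EReal.coe_le_coe_iff] at he1 he2
  have heq :
      a + (q x + 1/2 * SnormSq (fun i => x i - z i) - ∑ i, ⟪x i, Δ i⟫)
        = b + (q xp + 1/2 * SnormSq (fun i => xp i - z i) - ∑ i, ⟪xp i, Δ i⟫) :=
    le_antisymm he1 he2
  have h1 := hxp0 (x 0)
  rw [ha, hb, ← EReal.coe_add, ← EReal.coe_add, EReal.coe_le_coe_iff] at h1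
  have h2 := Gdiff x
  have h3 : ∑ j ∈ Finset.univ.filter (fun j => j ≠ 0),
      ⟪Qb j j (x j - xp j)
          + ∑ k ∈ Finset.univ.filter (fun k => k < j), Qb j k (x k - xp k),
        Qinv j (Qb j j (x j - xp j)
          + ∑ k ∈ Finset.univ.filter (fun k => k < j), Qb j k (x k - xp k))⟫ = 0 := by
    have h4 : (0:ℝ) ≤ ∑ j ∈ Finset.univ.filter (fun j => j ≠ 0),
        ⟪Qb j j (x j - xp j)
            + ∑ k ∈ Finset.univ.filter (fun k => k < j), Qb j k (x k - xp k),
          Qinv j (Qb j j (x j - xp j)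
            + ∑ k ∈ Finset.univ.filter (fun k => k < j), Qb j k (x k - xp k))⟫ :=
      Finset.sum_nonneg fun j _ => hinv_nonneg _ _
    linarith
  have hw : ∀ j : Fin (s+2), j ≠ 0 →
      Qb j j (x j - xp j)
        + ∑ k ∈ Finset.univ.filter (fun k => k < j), Qb j k (x k - xp k) = 0 := by
    intro j hj
    refine hinv_zero _ _ ?_
    have := (Finset.sum_eq_zero_iff_of_nonneg (fun j _ => hinv_nonneg _ _)).mp h3
    exact this j (by simp [hj])
  have hphieq : a + (q (Function.update x' 0 (x 0)) - ⟪δ 0, x 0⟫)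
      = b + (q (Function.update x' 0 (xp 0)) - ⟪δ 0, xp 0⟫) := by
    linarith
  have h00 : x 0 = xp 0 := by
    by_contra hne0
    have he : x 0 - xp 0 ≠ 0 := sub_ne_zero.mpr hne0
    have hκ := hpd 0 _ he
    have hIm := Iphi ((1/2:ℝ) • (x 0) + (1/2:ℝ) • (xp 0))
    have hIx := Iphi (x 0)
    have hmidsub : ((1/2:ℝ) • (x 0) + (1/2:ℝ) • (xp 0)) - xp 0 = (1/2:ℝ) • (x 0 - xp 0) := by
      module
    rw [hmidsub] at hIm
    simp only [map_smul, real_inner_smul_left, real_inner_smul_right] at hIm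
    have hpm := hp_convex (x 0) (xp 0) (1/2) (1/2) (by norm_num) (by norm_num) (by norm_num)
    rw [ha, hb] at hpm
    have hcoe : ((1/2:ℝ) : EReal) * (a : EReal) + ((1/2:ℝ):EReal) * (b:EReal)
        = ((1/2*a + 1/2*b : ℝ) : EReal) := by
      rw [← EReal.coe_mul, ← EReal.coe_mul, ← EReal.coe_add]
    rw [hcoe] at hpm
    have hpmtop : p ((1/2:ℝ) • x 0 + (1/2:ℝ) • xp 0) ≠ ⊤ := by
      intro h
      rw [h, top_le_iff] at hpm
      exact (EReal.coe_ne_top _) hpm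
    obtain ⟨m, hm⟩ : ∃ m : ℝ, p ((1/2:ℝ) • x 0 + (1/2:ℝ) • xp 0) = (m : EReal) := by
      lift p ((1/2:ℝ) • x 0 + (1/2:ℝ) • xp 0) to ℝ using ⟨hpmtop, hp_proper _⟩ with m hm
      exact ⟨m, rfl⟩
    rw [hm, EReal.coe_le_coe_iff] at hpm
    have hlow := hxp0 ((1/2:ℝ) • x 0 + (1/2:ℝ) • xp 0)
    rw [hb, hm, ← EReal.coe_add, ← EReal.coe_add, EReal.coe_le_coe_iff] at hlow
    linarith
  have hall : ∀ n : ℕ, ∀ j : Fin (s+2), (j : ℕ) = n → x j = xp j := by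
    intro n
    induction n using Nat.strong_induction_on with
    | _ n ih =>
      intro j hj
      by_cases hj0 : j = 0
      · rw [hj0]
        exact h00
      · have hwj := hw j hj0
        have hz : ∑ k ∈ Finset.univ.filter (fun k => k < j), Qb j k (x k - xp k) = 0 := by
          refine Finset.sum_eq_zero fun k hk => ?_
          have hk' : k < j := (Finset.mem_filter.mp hk).2
          have hxk : x k = xp k := ih (k : ℕ) (by rw [← hj]; exact hk') k rfl
          rw [hxk, sub_self, map_zero]
        rw [hz, add_zero] at hwj
        have h5 : x j - xp j = Qinv j (Qb j j (x j - xp j)) := (hIQ j _).symm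
        rw [hwj, map_zero] at h5
        exact sub_eq_zero.mp h5
  funext i
  exact hall (i : ℕ) i rfl
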